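/- Let ℓ ≥ 1 be an integer, a = 2π/(2ℓ+1), and let j, j' be integers with -ℓ ≤ j, j' ≤ ℓ. Then ∫₀^{π} ∫₀^{2π} (X(θ,φ)·N_j)^ℓ · conj((X(θ,φ)·N_{j'})^ℓ) · sin θ dφ dθ = (4π·(ℓ!)²/((2ℓ+1)·(2ℓ)!)) · (2·cos((j-j')·π/(2ℓ+1)))^{2ℓ}, where X(θ,φ) = (cos θ, sin θ·cos φ, sin θ·sin φ) and conj denotes complex conjugation. In particular the functions Φ_j and Φ_{j'} are not orthogonal in L²(S²). -/

import Mathlib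

open Real

/-- The null vector `N(α) = (1, i sin α, i cos α) ∈ ℂ³`. -/
noncomputable def Nvec (α : ℝ) : Fin 3 → ℂ :=
  ![1, Complex.I * Real.sin α, Complex.I * Real.cos α]

/-- The bilinear (non-Hermitian) pairing of `X ∈ ℝ³` with `Z ∈ ℂ³`. -/
noncomputable def dotRC (X : Fin 3 → ℝ) (Z : Fin 3 → ℂ) : ℂ :=
  ∑ i, (X i : ℂ) * Z i

/-- The point of the unit sphere with colatitude `θ` and longitude `φ`. -/
noncomputable def spherePt (θ φ : ℝ) : Fin 3 → ℝ :=
  ![Real.cos θ, Real.sin θ * Real.cos φ, Real.sin θ * Real.sin φ]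


open Finset intervalIntegral


lemma SP_sum_split {M : Type*} [AddCommMonoid M] (f : ℕ → M) (k : ℕ) :
    ∑ p ∈ range (2*k+1), f p
      = (∑ q ∈ range (k+1), f (2*q)) + ∑ q ∈ range k, f (2*q+1) := by
  induction k with
  | zero => simp
  | succ k ih =>
      rw [show 2*(k+1)+1 = ((2*k+1)+1)+1 from by ring, sum_range_succ, sum_range_succ, ih,
        sum_range_succ (fun q => f (2*q)) (k+1), sum_range_succ (fun q => f (2*q+1)) k,
        show 2*(k+1) = 2*k+1+1 from by ring]
      abel

lemma SP_prod_odd (m : ℕ) : ∀ q : ℕ,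
    (2:ℝ)^q * (Nat.factorial (m+q)) * (Nat.factorial (2*m)) *
      (∏ i ∈ range (q+1), (2*(m:ℝ)+2*i+1))
    = (Nat.factorial (2*m+2*q+1)) * (Nat.factorial m) := by
  intro q
  induction q with
  | zero =>
      rw [prod_range_one, show 2*m+2*0+1 = (2*m)+1 from by ring, Nat.factorial_succ,
        Nat.add_zero]
      push_cast
      ring
  | succ q ih =>
      rw [prod_range_succ, show m+(q+1) = (m+q)+1 from by ring,
        show 2*m+2*(q+1)+1 = ((2*m+2*q+1)+1)+1 from by ring,
        Nat.factorial_succ, Nat.factorial_succ, Nat.factorial_succ]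
      push_cast
      push_cast at ih
      linear_combination ((2*(m:ℝ)+2*(q:ℝ)+3)*(2*(m:ℝ)+2*(q:ℝ)+2)) * ih

lemma SP_prod_two : ∀ n : ℕ, ∏ i ∈ range n, (2*(i:ℝ)+2) = 2^n * Nat.factorial n := by
  intro n
  induction n with
  | zero => simp
  | succ n ih =>
      rw [prod_range_succ, ih, Nat.factorial_succ]
      push_cast
      ring

lemma SP_prod_odd1 : ∀ n : ℕ,
    (2:ℝ)^n * Nat.factorial n * ∏ i ∈ range n, (2*(i:ℝ)+1) = Nat.factorial (2*n) := by
  intro n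
  induction n with
  | zero => simp
  | succ n ih =>
      rw [prod_range_succ, Nat.factorial_succ,
        show 2*(n+1) = ((2*n)+1)+1 from by ring, Nat.factorial_succ, Nat.factorial_succ]
      push_cast
      push_cast at ih
      linear_combination ((2*(n:ℝ)+2)*(2*(n:ℝ)+1)) * ih

lemma SP_prod_even (n : ℕ) :
    (∏ i ∈ range n, (2*(i:ℝ)+1)/(2*i+2)) = Nat.factorial (2*n) / (4^n * (Nat.factorial n)^2) := by
  rw [prod_div_distrib, SP_prod_two]
  rw [show (4:ℝ)^n = 2^n * 2^n from by rw [← mul_pow]; norm_num]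
  have h2 : (2:ℝ)^n * Nat.factorial n ≠ 0 := by positivity
  have h4 : (2:ℝ)^n * 2^n * (Nat.factorial n : ℝ)^2 ≠ 0 := by positivity
  rw [div_eq_div_iff h2 h4]
  have := SP_prod_odd1 n
  linear_combination ((2:ℝ)^n * (Nat.factorial n : ℝ)) * this


lemma SP_F : ∀ (q : ℕ) (x : ℝ), 0 < x →
    ∑ r ∈ range (q+1), (-1:ℝ)^r * (Nat.choose q r) / (x+r)
      = (Nat.factorial q) / ∏ i ∈ range (q+1), (x+i) := by
  intro q
  induction q with
  | zero => intro x hx; simp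
  | succ q ih =>
      intro x hx
      have key : ∑ r ∈ range (q+2), (-1:ℝ)^r * (Nat.choose (q+1) r) / (x+r)
          = (∑ r ∈ range (q+1), (-1:ℝ)^r * (Nat.choose q r)/(x+r))
            - ∑ r ∈ range (q+1), (-1:ℝ)^r * (Nat.choose q r)/((x+1)+r) := by
        rw [Finset.sum_range_succ' (fun r => (-1:ℝ)^r * (Nat.choose (q+1) r) / (x+r)) (q+1)]
        have e1 : ∀ r ∈ range (q+1),
            (-1:ℝ)^(r+1) * (Nat.choose (q+1) (r+1)) / (x+((r+1:ℕ):ℝ))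
            = (-((-1:ℝ)^r * (Nat.choose q r)/((x+1)+r)))
              + (-1:ℝ)^(r+1) * (Nat.choose q (r+1)) / (x+((r+1:ℕ):ℝ)) := by
          intro r _
          rw [Nat.choose_succ_succ]
          push_cast
          have hne : x + ((r:ℝ)+1) ≠ 0 := by positivity
          field_simp
          ring
        rw [Finset.sum_congr rfl e1, Finset.sum_add_distrib]
        have e2 : ∑ r ∈ range (q+1), (-1:ℝ)^(r+1) * (Nat.choose q (r+1)) / (x+((r+1:ℕ):ℝ))
            = (∑ r ∈ range (q+1), (-1:ℝ)^r * (Nat.choose q r)/(x+r)) - 1/x := by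
          have h3 := Finset.sum_range_succ' (fun r => (-1:ℝ)^r * (Nat.choose q r) / (x+r)) (q+1)
          have h4 := Finset.sum_range_succ (fun r => (-1:ℝ)^r * (Nat.choose q r) / (x+r)) (q+1)
          rw [Nat.choose_succ_self] at h4
          simp only [Nat.cast_zero, mul_zero, zero_mul, zero_div, add_zero, pow_zero,
            Nat.choose_zero_right, Nat.cast_one, mul_one, one_mul] at h3 h4
          have h5 := h3.symm.trans h4
          linarith [h5]
        rw [e2]
        simp only [Nat.choose_zero_right, pow_zero, Nat.cast_one, Nat.cast_zero, add_zero,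
          one_mul, mul_one, Finset.sum_neg_distrib]
        ring
      rw [show q+1+1 = q+2 from rfl, key, ih x hx, ih (x+1) (by linarith)]
      have hP1 : (0:ℝ) < ∏ i ∈ range (q+1), (x+i) := by
        apply Finset.prod_pos; intro i _; positivity
      have hP2 : (0:ℝ) < ∏ i ∈ range (q+1), ((x+1)+i) := by
        apply Finset.prod_pos; intro i _; positivity
      have hP3 : (0:ℝ) < ∏ i ∈ range (q+2), (x+i) := by
        apply Finset.prod_pos; intro i _; positivity
      have hx1 : ∏ i ∈ range (q+2), (x+i) = (∏ i ∈ range (q+1), (x+i)) * (x+(q:ℝ)+1) := by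
        rw [Finset.prod_range_succ]; push_cast; ring
      have hx2 : ∏ i ∈ range (q+2), (x+i) = x * ∏ i ∈ range (q+1), ((x+1)+i) := by
        rw [Finset.prod_range_succ' (fun i => (x+(i:ℝ))) (q+1)]
        push_cast
        rw [add_zero, mul_comm]
        congr 1
        apply Finset.prod_congr rfl
        intro i _
        ring
      have hn1 := hP1.ne'
      have hn2 := hP2.ne'
      have hn3 := hP3.ne'
      rw [eq_div_iff hn3, sub_mul]
      have t1 : (Nat.factorial q : ℝ) / (∏ i ∈ range (q+1), (x+i)) *
          (∏ i ∈ range (q+2), (x+i)) = (Nat.factorial q : ℝ) * (x+(q:ℝ)+1) := by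
        rw [hx1]; field_simp
      have t2 : (Nat.factorial q : ℝ) / (∏ i ∈ range (q+1), ((x+1)+i)) *
          (∏ i ∈ range (q+2), (x+i)) = (Nat.factorial q : ℝ) * x := by
        rw [hx2]; field_simp
      rw [t1, t2, Nat.factorial_succ]
      push_cast
      ring

lemma SP_beta (m q : ℕ) : (∫ u in (-1:ℝ)..1, u^(2*m)*(1-u^2)^q)
    = 2*4^q*(Nat.factorial q : ℝ)*(Nat.factorial (m+q) : ℝ)*(Nat.factorial (2*m) : ℝ) /
        ((Nat.factorial (2*m+2*q+1) : ℝ) * (Nat.factorial m : ℝ)) := by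
  have hpt : ∀ u : ℝ, u^(2*m)*(1-u^2)^q
      = ∑ r ∈ range (q+1), (-1:ℝ)^r * (Nat.choose q r) * u^(2*m+2*r) := by
    intro u
    rw [show (1-u^2) = (-u^2) + 1 from by ring, add_pow, Finset.mul_sum]
    apply Finset.sum_congr rfl
    intro r _
    rw [one_pow, mul_one]
    ring
  simp_rw [hpt]
  rw [intervalIntegral.integral_finset_sum
      (fun r _ => by apply Continuous.intervalIntegrable; fun_prop)]
  have hterm : ∀ r ∈ range (q+1),
      (∫ u in (-1:ℝ)..1, (-1:ℝ)^r * (Nat.choose q r) * u^(2*m+2*r))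
      = (-1:ℝ)^r * (Nat.choose q r) / (((2*m+1:ℕ):ℝ)/2 + r) := by
    intro r _
    rw [intervalIntegral.integral_const_mul, integral_pow]
    have hodd : Odd (2*m+2*r+1) := ⟨m+r, by ring⟩
    rw [one_pow, hodd.neg_one_pow]
    push_cast
    have h1 : (2*(m:ℝ)+2*r+1) ≠ 0 := by positivity
    have h2 : ((2*(m:ℝ)+1)/2 + r) ≠ 0 := by positivity
    field_simp
    ring
  rw [Finset.sum_congr rfl hterm, SP_F q (((2*m+1:ℕ):ℝ)/2) (by positivity)]
  have hP : ∏ i ∈ range (q+1), (((2*m+1:ℕ):ℝ)/2 + i)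
      = (∏ i ∈ range (q+1), (2*(m:ℝ)+2*i+1)) / 2^(q+1) := by
    rw [eq_div_iff (by positivity : ((2:ℝ)^(q+1)) ≠ 0),
      show ((2:ℝ)^(q+1)) = ∏ _i ∈ range (q+1), (2:ℝ) from by
        rw [Finset.prod_const, Finset.card_range],
      ← Finset.prod_mul_distrib]
    apply Finset.prod_congr rfl
    intro i _
    push_cast
    ring
  rw [hP]
  have h1 : (0:ℝ) < ∏ i ∈ range (q+1), (2*(m:ℝ)+2*i+1) := by
    apply Finset.prod_pos; intro i _; positivity
  have h2 := SP_prod_odd m q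
  rw [div_div_eq_mul_div, div_eq_div_iff (by positivity) (by positivity),
    show (4:ℝ)^q = 2^q * 2^q from by rw [← mul_pow]; norm_num]
  push_cast at h2 ⊢
  linear_combination (-2*(2:ℝ)^q*(Nat.factorial q : ℝ)) * h2


lemma SP_E2 (q m : ℕ) : (∫ x in (0:ℝ)..π, sin x ^ (2*q+1) * cos x ^ (2*m))
    = 2*4^q*(Nat.factorial q : ℝ)*(Nat.factorial (m+q) : ℝ)*(Nat.factorial (2*m) : ℝ) /
        ((Nat.factorial (2*m+2*q+1) : ℝ) * (Nat.factorial m : ℝ)) := by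
  rw [integral_sin_pow_odd_mul_cos_pow q (2*m), Real.cos_pi, Real.cos_zero]
  rw [← SP_beta m q]

lemma SP_periodic_pow (p : ℕ) : Function.Periodic (fun x : ℝ => Real.cos x ^ p) (2*π) :=
  fun x => by simp [Real.cos_periodic x]

lemma SP_sin_periodic_pow (p : ℕ) : Function.Periodic (fun x : ℝ => Real.sin x ^ p) (2*π) :=
  fun x => by simp [Real.sin_periodic x]

lemma SP_cos_to_sin (p : ℕ) :
    (∫ x in (0:ℝ)..(2*π), Real.cos x ^ p) = ∫ x in (0:ℝ)..(2*π), Real.sin x ^ p := by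
  have h1 : (∫ x in (0:ℝ)..(2*π), Real.cos x ^ p)
      = ∫ x in (0:ℝ)..(2*π), Real.sin (x + π/2) ^ p := by
    apply intervalIntegral.integral_congr
    intro x _
    simp [Real.sin_add_pi_div_two]
  rw [h1, intervalIntegral.integral_comp_add_right (fun x => Real.sin x ^ p) (π/2)]
  have h2 := (SP_sin_periodic_pow p).intervalIntegral_add_eq (π/2) 0
  rw [zero_add] at h2
  rw [zero_add, show (2*π + π/2 : ℝ) = π/2 + 2*π from by ring]
  exact h2

lemma SP_split_two_pi (p : ℕ) :
    (∫ x in (0:ℝ)..(2*π), Real.sin x ^ p)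
      = (∫ x in (0:ℝ)..π, Real.sin x ^ p) + (-1:ℝ)^p * ∫ x in (0:ℝ)..π, Real.sin x ^ p := by
  have hint : ∀ a b : ℝ, IntervalIntegrable (fun x => Real.sin x ^ p) MeasureTheory.volume a b :=
    fun a b => (continuous_sin.pow p).intervalIntegrable a b
  rw [← intervalIntegral.integral_add_adjacent_intervals (hint 0 π) (hint π (2*π))]
  congr 1
  have h2 : (∫ x in π..(2*π), Real.sin x ^ p) = ∫ x in (0:ℝ)..π, Real.sin (x + π) ^ p := by
    rw [intervalIntegral.integral_comp_add_right (fun x => Real.sin x ^ p) π]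
    norm_num
    rw [show (2*π : ℝ) = π + π from by ring]
  rw [h2]
  rw [← intervalIntegral.integral_const_mul]
  apply intervalIntegral.integral_congr
  intro x _
  simp [Real.sin_add_pi]
  ring

lemma SP_E1_even (q : ℕ) : (∫ x in (0:ℝ)..(2*π), Real.cos x ^ (2*q))
    = 2*π*(Nat.factorial (2*q) : ℝ) / (4^q * (Nat.factorial q : ℝ)^2) := by
  rw [SP_cos_to_sin, SP_split_two_pi]
  have he : (-1:ℝ)^(2*q) = 1 := by
    rw [pow_mul]; norm_num
  rw [he, one_mul, integral_sin_pow_even, SP_prod_even q]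
  ring

lemma SP_E1_odd (q : ℕ) : (∫ x in (0:ℝ)..(2*π), Real.cos x ^ (2*q+1)) = 0 := by
  rw [SP_cos_to_sin, SP_split_two_pi]
  have he : (-1:ℝ)^(2*q+1) = -1 := by
    rw [pow_succ, pow_mul]; norm_num
  rw [he]
  ring

lemma SP_shift (δ : ℝ) (p : ℕ) :
    (∫ φ in (0:ℝ)..(2*π), Real.cos (φ + δ) ^ p) = ∫ x in (0:ℝ)..(2*π), Real.cos x ^ p := by
  rw [intervalIntegral.integral_comp_add_right (fun x => Real.cos x ^ p) δ]
  have h2 := (SP_periodic_pow p).intervalIntegral_add_eq δ 0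
  rw [zero_add] at h2
  rw [zero_add, show (2*π + δ : ℝ) = δ + 2*π from by ring]
  exact h2

lemma SP_inner_coeff (n q : ℕ) (hq : q ≤ n) :
    ((2*n).choose (2*q) : ℝ) * (2*π*(Nat.factorial (2*q):ℝ)/(4^q*(Nat.factorial q:ℝ)^2))
      * (2*4^q*(Nat.factorial q:ℝ)*(Nat.factorial n:ℝ)*(Nat.factorial (2*(n-q)):ℝ) /
          ((Nat.factorial (2*n+1):ℝ)*(Nat.factorial (n-q):ℝ)))
    = 4*π*(Nat.choose n q : ℝ)/(2*n+1) := by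
  have e1 : 2*n - 2*q = 2*(n-q) := by omega
  have hfq : (Nat.factorial q : ℝ) ≠ 0 := by positivity
  have hfnq : (Nat.factorial (n-q) : ℝ) ≠ 0 := by positivity
  have hf2q : (Nat.factorial (2*q) : ℝ) ≠ 0 := by positivity
  have hf2nq : (Nat.factorial (2*(n-q)) : ℝ) ≠ 0 := by positivity
  have hf2n : (Nat.factorial (2*n) : ℝ) ≠ 0 := by positivity
  have h2n1 : (2*(n:ℝ)+1) ≠ 0 := by positivity
  have h3 : (Nat.factorial (2*n+1):ℝ) = (2*(n:ℝ)+1) * (Nat.factorial (2*n):ℝ) := by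
    rw [Nat.factorial_succ]; push_cast; ring
  rw [Nat.cast_choose ℝ (show 2*q ≤ 2*n by omega), Nat.cast_choose ℝ hq, e1, h3]
  field_simp
  ring

lemma SP_qsum (n : ℕ) (g : ℝ) :
    ∑ q ∈ range (n+1), ((2*n).choose (2*q) : ℝ)
        * (2*π*(Nat.factorial (2*q):ℝ)/(4^q*(Nat.factorial q:ℝ)^2))
        * (2*4^q*(Nat.factorial q:ℝ)*(Nat.factorial n:ℝ)*(Nat.factorial (2*(n-q)):ℝ) /
            ((Nat.factorial (2*n+1):ℝ)*(Nat.factorial (n-q):ℝ)))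
        * (-Real.sin g^2)^(n-q)
      = 4*π/(2*n+1) * ((Real.cos g)^2)^n := by
  have hcongr : ∀ q ∈ range (n+1), ((2*n).choose (2*q) : ℝ)
        * (2*π*(Nat.factorial (2*q):ℝ)/(4^q*(Nat.factorial q:ℝ)^2))
        * (2*4^q*(Nat.factorial q:ℝ)*(Nat.factorial n:ℝ)*(Nat.factorial (2*(n-q)):ℝ) /
            ((Nat.factorial (2*n+1):ℝ)*(Nat.factorial (n-q):ℝ)))
        * (-Real.sin g^2)^(n-q)
      = (4*π/(2*n+1)) * ((1:ℝ)^q * (-Real.sin g^2)^(n-q) * (n.choose q : ℝ)) := by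
    intro q hq
    rw [mem_range] at hq
    rw [SP_inner_coeff n q (by omega)]
    ring
  rw [Finset.sum_congr rfl hcongr, ← Finset.mul_sum, ← add_pow]
  congr 1
  rw [show ((1:ℝ) + -Real.sin g^2) = (Real.cos g)^2 from by rw [Real.cos_sq']; ring]

lemma SP_sum_alt (ℓ : ℕ) :
    ∑ k ∈ range (ℓ+1), (-1:ℝ)^k * (Nat.choose ℓ k) / (2*k+1)
      = 4^ℓ * (Nat.factorial ℓ:ℝ)^2 / (Nat.factorial (2*ℓ+1):ℝ) := by
  have hF := SP_F ℓ (1/2) (by norm_num)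
  have hs : ∑ k ∈ range (ℓ+1), (-1:ℝ)^k * (Nat.choose ℓ k) / (2*k+1)
      = (1/2) * ∑ r ∈ range (ℓ+1), (-1:ℝ)^r * (Nat.choose ℓ r) / ((1:ℝ)/2+r) := by
    rw [Finset.mul_sum]
    apply Finset.sum_congr rfl
    intro k _
    rw [show (2*(k:ℝ)+1) = ((1:ℝ)/2+(k:ℝ))*2 from by ring, ← div_div]
    ring
  have hP : ∏ i ∈ range (ℓ+1), ((1:ℝ)/2 + i)
      = (∏ i ∈ range (ℓ+1), (2*(i:ℝ)+1)) / 2^(ℓ+1) := by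
    rw [eq_div_iff (by positivity : ((2:ℝ)^(ℓ+1)) ≠ 0),
      show ((2:ℝ)^(ℓ+1)) = ∏ _i ∈ range (ℓ+1), (2:ℝ) from by
        rw [Finset.prod_const, Finset.card_range],
      ← Finset.prod_mul_distrib]
    apply Finset.prod_congr rfl
    intro i _
    ring
  have hO := SP_prod_odd 0 ℓ
  simp only [Nat.zero_add, Nat.add_zero, Nat.mul_zero, Nat.cast_zero, mul_zero, zero_add,
    Nat.factorial_zero, Nat.cast_one, mul_one, one_mul, zero_mul] at hO
  have hprodpos : (0:ℝ) < ∏ i ∈ range (ℓ+1), (2*(i:ℝ)+1) := by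
    apply Finset.prod_pos; intro i _; positivity
  rw [hs, hF, hP,
    show (4:ℝ)^ℓ = 2^ℓ * 2^ℓ from by rw [← mul_pow]; norm_num]
  have hne := hprodpos.ne'
  have hfne : (Nat.factorial (2*ℓ+1):ℝ) ≠ 0 := by positivity
  rw [← hO]
  field_simp
  ring

lemma SP_finale (ℓ : ℕ) (g : ℝ) :
    ∑ k ∈ range (ℓ+1), ∑ q ∈ range ((ℓ-k)+1),
      ((Real.cos g)^2)^k * (-1:ℝ)^(ℓ-k) * (Nat.choose ℓ k : ℝ)
        * (((2*(ℓ-k)).choose (2*q) : ℝ)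
        * (2*π*(Nat.factorial (2*q):ℝ)/(4^q*(Nat.factorial q:ℝ)^2))
        * (2*4^q*(Nat.factorial q:ℝ)*(Nat.factorial (ℓ-k):ℝ)*(Nat.factorial (2*((ℓ-k)-q)):ℝ) /
            ((Nat.factorial (2*(ℓ-k)+1):ℝ)*(Nat.factorial ((ℓ-k)-q):ℝ)))
        * (-Real.sin g^2)^((ℓ-k)-q))
      = 4*π*(Nat.factorial ℓ:ℝ)^2/((2*(ℓ:ℝ)+1)*(Nat.factorial (2*ℓ):ℝ)) * (2*Real.cos g)^(2*ℓ) := by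
  have hk : ∀ k ∈ range (ℓ+1), ∑ q ∈ range ((ℓ-k)+1),
      ((Real.cos g)^2)^k * (-1:ℝ)^(ℓ-k) * (Nat.choose ℓ k : ℝ)
        * (((2*(ℓ-k)).choose (2*q) : ℝ)
        * (2*π*(Nat.factorial (2*q):ℝ)/(4^q*(Nat.factorial q:ℝ)^2))
        * (2*4^q*(Nat.factorial q:ℝ)*(Nat.factorial (ℓ-k):ℝ)*(Nat.factorial (2*((ℓ-k)-q)):ℝ) /
            ((Nat.factorial (2*(ℓ-k)+1):ℝ)*(Nat.factorial ((ℓ-k)-q):ℝ)))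
        * (-Real.sin g^2)^((ℓ-k)-q))
      = (fun i : ℕ => (-1:ℝ)^i * (Nat.choose ℓ i : ℝ) * (4*π/(2*((i:ℕ):ℝ)+1))
          * ((Real.cos g)^2)^ℓ) (ℓ-k) := by
    intro k hkr
    rw [mem_range] at hkr
    have hq := SP_qsum (ℓ-k) g
    calc ∑ q ∈ range ((ℓ-k)+1),
      ((Real.cos g)^2)^k * (-1:ℝ)^(ℓ-k) * (Nat.choose ℓ k : ℝ)
        * (((2*(ℓ-k)).choose (2*q) : ℝ)
        * (2*π*(Nat.factorial (2*q):ℝ)/(4^q*(Nat.factorial q:ℝ)^2))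
        * (2*4^q*(Nat.factorial q:ℝ)*(Nat.factorial (ℓ-k):ℝ)*(Nat.factorial (2*((ℓ-k)-q)):ℝ) /
            ((Nat.factorial (2*(ℓ-k)+1):ℝ)*(Nat.factorial ((ℓ-k)-q):ℝ)))
        * (-Real.sin g^2)^((ℓ-k)-q))
        = ((Real.cos g)^2)^k * (-1:ℝ)^(ℓ-k) * (Nat.choose ℓ k : ℝ)
            * (4*π/(2*(((ℓ-k):ℕ):ℝ)+1) * ((Real.cos g)^2)^(ℓ-k)) := by
          rw [← Finset.mul_sum, hq]
      _ = (-1:ℝ)^(ℓ-k) * (Nat.choose ℓ k : ℝ) * (4*π/(2*(((ℓ-k):ℕ):ℝ)+1))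
            * (((Real.cos g)^2)^k * ((Real.cos g)^2)^(ℓ-k)) := by ring
      _ = (-1:ℝ)^(ℓ-k) * (Nat.choose ℓ (ℓ-k) : ℝ) * (4*π/(2*(((ℓ-k):ℕ):ℝ)+1))
            * ((Real.cos g)^2)^ℓ := by
          rw [← pow_add, show k + (ℓ-k) = ℓ from by omega, Nat.choose_symm (by omega : k ≤ ℓ)]
  rw [Finset.sum_congr rfl hk]
  simp only []
  have hrefl := Finset.sum_range_reflect
    (fun i : ℕ => (-1:ℝ)^i * (Nat.choose ℓ i : ℝ) * (4*π/(2*((i:ℕ):ℝ)+1))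
          * ((Real.cos g)^2)^ℓ) (ℓ+1)
  simp only [Nat.add_sub_cancel] at hrefl
  rw [hrefl]
  have hterm : ∀ i ∈ range (ℓ+1),
      (-1:ℝ)^i * (Nat.choose ℓ i : ℝ) * (4*π/(2*((i:ℕ):ℝ)+1)) * ((Real.cos g)^2)^ℓ
      = (4*π*((Real.cos g)^2)^ℓ) * ((-1:ℝ)^i * (Nat.choose ℓ i : ℝ) / (2*(i:ℝ)+1)) := by
    intro i _
    ring
  rw [Finset.sum_congr rfl hterm, ← Finset.mul_sum, SP_sum_alt ℓ]
  have hfac : (Nat.factorial (2*ℓ+1):ℝ) = (2*(ℓ:ℝ)+1)*(Nat.factorial (2*ℓ):ℝ) := by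
    rw [Nat.factorial_succ]; push_cast; ring
  rw [hfac, show (2*Real.cos g)^(2*ℓ) = 4^ℓ*((Real.cos g)^2)^ℓ from by
    rw [pow_mul, show (2*Real.cos g)^2 = 4*(Real.cos g)^2 from by ring, mul_pow]]
  have h1 : (2*(ℓ:ℝ)+1) ≠ 0 := by positivity
  have h2 : (Nat.factorial (2*ℓ):ℝ) ≠ 0 := by positivity
  field_simp

lemma SP_key_factor' (c s cp sp cg sg : ℝ) (h1 : s^2+c^2=1) (h2 : sp^2+cp^2=1)
    (h3 : sg^2+cg^2=1) :
    ((c:ℂ) + Complex.I * s * (sp*cg + cp*sg)) * ((c:ℂ) - Complex.I * s * (sp*cg - cp*sg))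
      = (cg:ℂ)^2 - ((s*cp : ℝ) - Complex.I * c * sg)^2 := by
  have h1' : (s:ℂ)^2+(c:ℂ)^2 = 1 := by exact_mod_cast congrArg Complex.ofReal h1
  have h2' : (sp:ℂ)^2+(cp:ℂ)^2 = 1 := by exact_mod_cast congrArg Complex.ofReal h2
  have h3' : (sg:ℂ)^2+(cg:ℂ)^2 = 1 := by exact_mod_cast congrArg Complex.ofReal h3
  have hI : Complex.I^2 = -1 := Complex.I_sq
  push_cast
  linear_combination ((s:ℂ)^2*(cg:ℂ)^2)*h2' - ((s:ℂ)^2*(cp:ℂ)^2 + (c:ℂ)^2)*h3'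
    + (cg:ℂ)^2*h1'
    - ((s:ℂ)^2*(((sp:ℂ)*cg+(cp:ℂ)*sg)*((sp:ℂ)*cg-(cp:ℂ)*sg)) - (c:ℂ)^2*(sg:ℂ)^2)*hI

lemma SP_dot_eq (θ φ α : ℝ) : dotRC (spherePt θ φ) (Nvec α)
    = (Real.cos θ : ℂ) + Complex.I * Real.sin θ * Real.sin (φ + α) := by
  simp only [dotRC, Nvec, spherePt, Fin.sum_univ_three, Matrix.cons_val_zero,
    Matrix.cons_val_one, Matrix.head_cons, Matrix.cons_val_two, Matrix.tail_cons,
    Real.sin_add]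
  push_cast
  ring

lemma SP_conj_pow (θ x : ℝ) (n : ℕ) :
    (starRingEnd ℂ) (((Real.cos θ : ℂ) + Complex.I * Real.sin θ * Real.sin x) ^ n)
      = ((Real.cos θ : ℂ) - Complex.I * Real.sin θ * Real.sin x) ^ n := by
  rw [map_pow]
  congr 1
  simp only [map_add, map_mul, Complex.conj_ofReal, Complex.conj_I]
  ring

/-- The `L²(S²)` scalar product of the basis functions `Φ_j` and `Φ_{j'}`:
`⟨Φ_j, Φ_{j'}⟩ = (4π (ℓ!)² / ((2ℓ+1)(2ℓ)!)) (2 cos((j-j')π/(2ℓ+1)))^{2ℓ}`.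
In particular it is nonzero, so the basis is not orthogonal. -/
lemma SP_key (θ ψ g : ℝ) :
    ((Real.cos θ : ℂ) + Complex.I * Real.sin θ * Real.sin (ψ + g)) *
      ((Real.cos θ : ℂ) - Complex.I * Real.sin θ * Real.sin (ψ - g))
    = (Real.cos g : ℂ)^2
      - ((Real.sin θ * Real.cos ψ : ℝ) - Complex.I * Real.cos θ * Real.sin g)^2 := by
  have h := SP_key_factor' (Real.cos θ) (Real.sin θ) (Real.cos ψ) (Real.sin ψ)
    (Real.cos g) (Real.sin g) (Real.sin_sq_add_cos_sq θ) (Real.sin_sq_add_cos_sq ψ)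
    (Real.sin_sq_add_cos_sq g)
  rw [Real.sin_add, Real.sin_sub]
  push_cast at h ⊢
  linear_combination h

lemma SP_integrand (θ φ g d : ℝ) (n : ℕ) :
    ((Real.cos θ : ℂ) + Complex.I * Real.sin θ * Real.sin (φ + (d + g)))^n *
      ((Real.cos θ : ℂ) - Complex.I * Real.sin θ * Real.sin (φ + (d - g)))^n
    = ((Real.cos g : ℂ)^2
        - ((Real.sin θ * Real.cos (φ + d) : ℝ) - Complex.I * Real.cos θ * Real.sin g)^2)^n := by
  rw [← mul_pow, show φ + (d + g) = (φ + d) + g from by ring,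
    show φ + (d - g) = (φ + d) - g from by ring, SP_key]

lemma SP_expand (u a b w : ℂ) (n : ℕ) :
    (u^2 - (a*b - w)^2)^n
      = ∑ k ∈ range (n+1), ∑ p ∈ range (2*(n-k)+1),
          (u^2)^k * (-1:ℂ)^(n-k) * ((n.choose k : ℕ) : ℂ) * (((2*(n-k)).choose p : ℕ) : ℂ)
            * a^p * (-w)^(2*(n-k)-p) * b^p := by
  rw [show u^2 - (a*b - w)^2 = u^2 + (-((a*b-w)^2)) from by ring, add_pow]
  apply Finset.sum_congr rfl
  intro k _
  have h1 : (-((a*b-w)^2))^(n-k) = (-1:ℂ)^(n-k) * ((a*b) + (-w))^(2*(n-k)) := by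
    rw [show (-((a*b-w)^2)) = (-1:ℂ) * ((a*b + -w)^2) from by ring, mul_pow, ← pow_mul]
  rw [h1, add_pow, Finset.mul_sum, Finset.mul_sum, Finset.sum_mul]
  apply Finset.sum_congr rfl
  intro p _
  ring

lemma SP_negIpow (x y : ℝ) (w : ℕ) :
    (-(Complex.I * (x:ℂ) * (y:ℂ)))^(2*w) = (-((y:ℂ)^2))^w * ((x:ℂ)^2)^w := by
  rw [pow_mul, show (-(Complex.I * (x:ℂ) * (y:ℂ)))^2 = Complex.I^2 * ((x:ℂ)^2 * (y:ℂ)^2) from by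
    ring, Complex.I_sq, ← mul_pow]
  congr 1
  ring

theorem scalar_product_Phi (ℓ : ℕ) (hℓ : 1 ≤ ℓ) (j j' : ℤ)
    (hj : j ∈ Finset.Icc (-(ℓ : ℤ)) ℓ) (hj' : j' ∈ Finset.Icc (-(ℓ : ℤ)) ℓ) :
    (∫ θ in (0 : ℝ)..π, ∫ φ in (0 : ℝ)..(2 * π),
        (dotRC (spherePt θ φ) (Nvec ((j : ℝ) * (2 * π / (2 * ℓ + 1))))) ^ ℓ *
          (starRingEnd ℂ)
            ((dotRC (spherePt θ φ) (Nvec ((j' : ℝ) * (2 * π / (2 * ℓ + 1))))) ^ ℓ) *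
          (Real.sin θ : ℂ))
      = (((4 * π * (Nat.factorial ℓ) ^ 2 / ((2 * ℓ + 1) * Nat.factorial (2 * ℓ))) *
            (2 * Real.cos ((j - j') * π / (2 * ℓ + 1))) ^ (2 * ℓ) : ℝ) : ℂ) := by
  have hone : (2*(ℓ:ℝ)+1) ≠ 0 := by positivity
  set g : ℝ := ((j:ℝ) - (j':ℝ)) * π / (2*(ℓ:ℝ)+1) with hgdef
  set d : ℝ := ((j:ℝ) + (j':ℝ)) * π / (2*(ℓ:ℝ)+1) with hddef
  have e1 : (j:ℝ) * (2 * π / (2 * (ℓ:ℝ) + 1)) = d + g := by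
    rw [hddef, hgdef]; field_simp; ring
  have e2 : (j':ℝ) * (2 * π / (2 * (ℓ:ℝ) + 1)) = d - g := by
    rw [hddef, hgdef]; field_simp; ring
  have hpt : ∀ θ φ : ℝ,
      (dotRC (spherePt θ φ) (Nvec ((j:ℝ)*(2*π/(2*(ℓ:ℝ)+1)))))^ℓ
        * (starRingEnd ℂ) ((dotRC (spherePt θ φ) (Nvec ((j':ℝ)*(2*π/(2*(ℓ:ℝ)+1)))))^ℓ)
        * ((Real.sin θ : ℝ):ℂ)
      = ∑ k ∈ range (ℓ+1), ∑ p ∈ range (2*(ℓ-k)+1),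
          ((((Real.cos g:ℝ):ℂ)^2)^k * (-1:ℂ)^(ℓ-k) * ((ℓ.choose k : ℕ):ℂ)
            * (((2*(ℓ-k)).choose p : ℕ):ℂ)
            * ((Real.sin θ:ℝ):ℂ)^p
            * (-(Complex.I * ((Real.cos θ:ℝ):ℂ) * ((Real.sin g:ℝ):ℂ)))^(2*(ℓ-k)-p)
            * ((Real.sin θ:ℝ):ℂ))
            * ((Real.cos (φ + d) ^ p : ℝ) : ℂ) := by
    intro θ φ
    rw [SP_dot_eq, SP_dot_eq, SP_conj_pow, e1, e2, SP_integrand θ φ g d ℓ,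
      Complex.ofReal_mul, SP_expand, Finset.sum_mul]
    apply Finset.sum_congr rfl
    intro k _
    rw [Finset.sum_mul]
    apply Finset.sum_congr rfl
    intro p _
    push_cast
    ring
  calc (∫ θ in (0 : ℝ)..π, ∫ φ in (0 : ℝ)..(2 * π),
        (dotRC (spherePt θ φ) (Nvec ((j : ℝ) * (2 * π / (2 * ℓ + 1))))) ^ ℓ *
          (starRingEnd ℂ)
            ((dotRC (spherePt θ φ) (Nvec ((j' : ℝ) * (2 * π / (2 * ℓ + 1))))) ^ ℓ) *
          (Real.sin θ : ℂ))
      = ∫ θ in (0 : ℝ)..π, ∑ k ∈ range (ℓ+1), ∑ q ∈ range ((ℓ-k)+1),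
          ((((Real.cos g:ℝ):ℂ)^2)^k * (-1:ℂ)^(ℓ-k) * ((ℓ.choose k : ℕ):ℂ)
            * (((2*(ℓ-k)).choose (2*q) : ℕ):ℂ)
            * ((Real.sin θ:ℝ):ℂ)^(2*q)
            * (-(Complex.I * ((Real.cos θ:ℝ):ℂ) * ((Real.sin g:ℝ):ℂ)))^(2*(ℓ-k)-2*q)
            * ((Real.sin θ:ℝ):ℂ))
            * ((2*π*(Nat.factorial (2*q) : ℝ) / (4^q * (Nat.factorial q : ℝ)^2) : ℝ) : ℂ) := by
        apply intervalIntegral.integral_congr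
        intro θ _
        simp only []
        rw [intervalIntegral.integral_congr (fun φ _ => hpt θ φ)]
        rw [intervalIntegral.integral_finset_sum (fun k _ => by
          apply Continuous.intervalIntegrable; fun_prop)]
        apply Finset.sum_congr rfl
        intro k _
        rw [intervalIntegral.integral_finset_sum (fun p _ => by
          apply Continuous.intervalIntegrable; fun_prop)]
        have hp : ∀ p ∈ range (2*(ℓ-k)+1),
            (∫ φ in (0:ℝ)..(2*π),
              ((((Real.cos g:ℝ):ℂ)^2)^k * (-1:ℂ)^(ℓ-k) * ((ℓ.choose k : ℕ):ℂ)
                * (((2*(ℓ-k)).choose p : ℕ):ℂ)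
                * ((Real.sin θ:ℝ):ℂ)^p
                * (-(Complex.I * ((Real.cos θ:ℝ):ℂ) * ((Real.sin g:ℝ):ℂ)))^(2*(ℓ-k)-p)
                * ((Real.sin θ:ℝ):ℂ))
                * ((Real.cos (φ + d) ^ p : ℝ) : ℂ))
            = ((((Real.cos g:ℝ):ℂ)^2)^k * (-1:ℂ)^(ℓ-k) * ((ℓ.choose k : ℕ):ℂ)
                * (((2*(ℓ-k)).choose p : ℕ):ℂ)
                * ((Real.sin θ:ℝ):ℂ)^p
                * (-(Complex.I * ((Real.cos θ:ℝ):ℂ) * ((Real.sin g:ℝ):ℂ)))^(2*(ℓ-k)-p)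
                * ((Real.sin θ:ℝ):ℂ))
                * (((∫ x in (0:ℝ)..(2*π), Real.cos x ^ p) : ℝ) : ℂ) := by
          intro p _
          rw [intervalIntegral.integral_const_mul]
          congr 1
          rw [intervalIntegral.integral_ofReal, SP_shift d p]
        rw [Finset.sum_congr rfl hp, SP_sum_split (fun p =>
            ((((Real.cos g:ℝ):ℂ)^2)^k * (-1:ℂ)^(ℓ-k) * ((ℓ.choose k : ℕ):ℂ)
                * (((2*(ℓ-k)).choose p : ℕ):ℂ)
                * ((Real.sin θ:ℝ):ℂ)^p
                * (-(Complex.I * ((Real.cos θ:ℝ):ℂ) * ((Real.sin g:ℝ):ℂ)))^(2*(ℓ-k)-p)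
                * ((Real.sin θ:ℝ):ℂ))
                * (((∫ x in (0:ℝ)..(2*π), Real.cos x ^ p) : ℝ) : ℂ)) (ℓ-k)]
        have hzero : (∑ q ∈ range (ℓ-k),
            ((((Real.cos g:ℝ):ℂ)^2)^k * (-1:ℂ)^(ℓ-k) * ((ℓ.choose k : ℕ):ℂ)
                * (((2*(ℓ-k)).choose (2*q+1) : ℕ):ℂ)
                * ((Real.sin θ:ℝ):ℂ)^(2*q+1)
                * (-(Complex.I * ((Real.cos θ:ℝ):ℂ) * ((Real.sin g:ℝ):ℂ)))^(2*(ℓ-k)-(2*q+1))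
                * ((Real.sin θ:ℝ):ℂ))
                * (((∫ x in (0:ℝ)..(2*π), Real.cos x ^ (2*q+1)) : ℝ) : ℂ)) = 0 := by
          apply Finset.sum_eq_zero
          intro q _
          rw [SP_E1_odd q]
          simp
        rw [hzero, add_zero]
        apply Finset.sum_congr rfl
        intro q _
        rw [SP_E1_even q]
    _ = ∑ k ∈ range (ℓ+1), ∑ q ∈ range ((ℓ-k)+1),
          (((((Real.cos g:ℝ):ℂ)^2)^k * (-1:ℂ)^(ℓ-k) * ((ℓ.choose k : ℕ):ℂ)
            * (((2*(ℓ-k)).choose (2*q) : ℕ):ℂ)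
            * ((2*π*(Nat.factorial (2*q) : ℝ) / (4^q * (Nat.factorial q : ℝ)^2) : ℝ) : ℂ)
            * (-((Real.sin g:ℝ):ℂ)^2)^((ℓ-k)-q))
            * ((2*4^q*(Nat.factorial q : ℝ)*(Nat.factorial (((ℓ-k)-q)+q) : ℝ)
                  *(Nat.factorial (2*((ℓ-k)-q)) : ℝ) /
                ((Nat.factorial (2*((ℓ-k)-q)+2*q+1) : ℝ) * (Nat.factorial ((ℓ-k)-q) : ℝ)) : ℝ) : ℂ)) := by
        rw [intervalIntegral.integral_finset_sum (fun k _ => by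
          apply Continuous.intervalIntegrable; fun_prop)]
        apply Finset.sum_congr rfl
        intro k hk
        rw [intervalIntegral.integral_finset_sum (fun q _ => by
          apply Continuous.intervalIntegrable; fun_prop)]
        apply Finset.sum_congr rfl
        intro q hq
        rw [Finset.mem_range] at hk hq
        have hpw : ∀ θ : ℝ,
            ((((Real.cos g:ℝ):ℂ)^2)^k * (-1:ℂ)^(ℓ-k) * ((ℓ.choose k : ℕ):ℂ)
              * (((2*(ℓ-k)).choose (2*q) : ℕ):ℂ)
              * ((Real.sin θ:ℝ):ℂ)^(2*q)
              * (-(Complex.I * ((Real.cos θ:ℝ):ℂ) * ((Real.sin g:ℝ):ℂ)))^(2*(ℓ-k)-2*q)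
              * ((Real.sin θ:ℝ):ℂ))
              * ((2*π*(Nat.factorial (2*q) : ℝ) / (4^q * (Nat.factorial q : ℝ)^2) : ℝ) : ℂ)
            = (((((Real.cos g:ℝ):ℂ)^2)^k * (-1:ℂ)^(ℓ-k) * ((ℓ.choose k : ℕ):ℂ)
              * (((2*(ℓ-k)).choose (2*q) : ℕ):ℂ)
              * ((2*π*(Nat.factorial (2*q) : ℝ) / (4^q * (Nat.factorial q : ℝ)^2) : ℝ) : ℂ)
              * (-((Real.sin g:ℝ):ℂ)^2)^((ℓ-k)-q))
              * ((Real.sin θ ^ (2*q+1) * Real.cos θ ^ (2*((ℓ-k)-q)) : ℝ) : ℂ)) := by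
          intro θ
          rw [show 2*(ℓ-k)-2*q = 2*((ℓ-k)-q) from by omega, SP_negIpow]
          push_cast
          ring
        rw [intervalIntegral.integral_congr (fun θ _ => hpw θ),
          intervalIntegral.integral_const_mul]
        congr 1
        rw [intervalIntegral.integral_ofReal, SP_E2 q ((ℓ-k)-q)]
    _ = (((4 * π * (Nat.factorial ℓ) ^ 2 / ((2 * ℓ + 1) * Nat.factorial (2 * ℓ))) *
            (2 * Real.cos ((j - j') * π / (2 * ℓ + 1))) ^ (2 * ℓ) : ℝ) : ℂ) := by
        have hsum : (∑ k ∈ range (ℓ+1), ∑ q ∈ range ((ℓ-k)+1),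
            (((((Real.cos g:ℝ):ℂ)^2)^k * (-1:ℂ)^(ℓ-k) * ((ℓ.choose k : ℕ):ℂ)
              * (((2*(ℓ-k)).choose (2*q) : ℕ):ℂ)
              * ((2*π*(Nat.factorial (2*q) : ℝ) / (4^q * (Nat.factorial q : ℝ)^2) : ℝ) : ℂ)
              * (-((Real.sin g:ℝ):ℂ)^2)^((ℓ-k)-q))
              * ((2*4^q*(Nat.factorial q : ℝ)*(Nat.factorial (((ℓ-k)-q)+q) : ℝ)
                    *(Nat.factorial (2*((ℓ-k)-q)) : ℝ) /
                  ((Nat.factorial (2*((ℓ-k)-q)+2*q+1) : ℝ) * (Nat.factorial ((ℓ-k)-q) : ℝ)) : ℝ) : ℂ)))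
          = Complex.ofReal (∑ k ∈ range (ℓ+1), ∑ q ∈ range ((ℓ-k)+1),
              ((Real.cos g)^2)^k * (-1:ℝ)^(ℓ-k) * (Nat.choose ℓ k : ℝ)
                * (((2*(ℓ-k)).choose (2*q) : ℝ)
                * (2*π*(Nat.factorial (2*q):ℝ)/(4^q*(Nat.factorial q:ℝ)^2))
                * (2*4^q*(Nat.factorial q:ℝ)*(Nat.factorial (ℓ-k):ℝ)
                    *(Nat.factorial (2*((ℓ-k)-q)):ℝ) /
                    ((Nat.factorial (2*(ℓ-k)+1):ℝ)*(Nat.factorial ((ℓ-k)-q):ℝ)))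
                * (-Real.sin g^2)^((ℓ-k)-q))) := by
          rw [Complex.ofReal_sum]
          apply Finset.sum_congr rfl
          intro k hk
          rw [Complex.ofReal_sum]
          apply Finset.sum_congr rfl
          intro q hq
          rw [Finset.mem_range] at hk hq
          rw [show ((ℓ-k)-q)+q = ℓ-k from by omega,
            show 2*((ℓ-k)-q)+2*q+1 = 2*(ℓ-k)+1 from by omega]
          push_cast
          ring
        rw [hsum]
        rw [show (∑ k ∈ range (ℓ+1), ∑ q ∈ range ((ℓ-k)+1),
              ((Real.cos g)^2)^k * (-1:ℝ)^(ℓ-k) * (Nat.choose ℓ k : ℝ)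
                * (((2*(ℓ-k)).choose (2*q) : ℝ)
                * (2*π*(Nat.factorial (2*q):ℝ)/(4^q*(Nat.factorial q:ℝ)^2))
                * (2*4^q*(Nat.factorial q:ℝ)*(Nat.factorial (ℓ-k):ℝ)
                    *(Nat.factorial (2*((ℓ-k)-q)):ℝ) /
                    ((Nat.factorial (2*(ℓ-k)+1):ℝ)*(Nat.factorial ((ℓ-k)-q):ℝ)))
                * (-Real.sin g^2)^((ℓ-k)-q)))
            = 4*π*(Nat.factorial ℓ:ℝ)^2/((2*(ℓ:ℝ)+1)*(Nat.factorial (2*ℓ):ℝ))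
                * (2*Real.cos g)^(2*ℓ) from SP_finale ℓ g]
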